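/- Let H be a Hopf algebra with involutive antipode (S² = id), and let h ∈ H be cocommutative, i.e. h₍₁₎ ⊗ h₍₂₎ = h₍₂₎ ⊗ h₍₁₎. Then the n-fold iterated coproduct of h is cyclically invariant: h₍₁₎ ⊗ h₍₂₎ ⊗ ⋯ ⊗ h₍ₙ₎ = h₍₂₎ ⊗ ⋯ ⊗ h₍ₙ₎ ⊗ h₍₁₎. -/

import Mathlib

open TensorProduct Coalgebra

noncomputable section

/-- A complex vector space, bundled with its instances (used to build iterated tensor
powers by recursion). -/
structure CBundle where
  carrier : Type
  [inst1 : AddCommMonoid carrier]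
  [inst2 : Module ℂ carrier]

attribute [instance] CBundle.inst1 CBundle.inst2

/-- `Tb B n` is the `(n+1)`-fold (right-nested) tensor power `B ⊗ B ⊗ ⋯ ⊗ B`. -/
def Tb (B : CBundle) : ℕ → CBundle
  | 0 => B
  | n + 1 => { carrier := TensorProduct ℂ B.carrier (Tb B n).carrier }

/-- The bundle of a Hopf algebra `H`. -/
def HB (H : Type) [Ring H] [HopfAlgebra ℂ H] : CBundle := { carrier := H }

/-- The iterated comultiplication `Δ⁽ⁿ⁾ : H → H^{⊗(n+1)}`,
`h ↦ h₍₁₎ ⊗ h₍₂₎ ⊗ ⋯ ⊗ h₍ₙ₊₁₎`. -/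
def iterComul (H : Type) [Ring H] [HopfAlgebra ℂ H] :
    (n : ℕ) → H →ₗ[ℂ] (Tb (HB H) n).carrier
  | 0 => LinearMap.id
  | n + 1 =>
      (TensorProduct.map LinearMap.id (iterComul H n)) ∘ₗ (comul : H →ₗ[ℂ] H ⊗[ℂ] H)

/-- `cycComul H n : H ⊗ H → H^{⊗(n+2)}` sends `a ⊗ b` to
`a₍₁₎ ⊗ ⋯ ⊗ a₍ₙ₊₁₎ ⊗ b`, i.e. it expands the first leg and appends the second leg
at the end.  Applied to the swap `h₍₂₎ ⊗ h₍₁₎` of `Δ(h)` it hence produces the cyclic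
shift `h₍₂₎ ⊗ ⋯ ⊗ h₍ₙ₊₂₎ ⊗ h₍₁₎` of the iterated coproduct. -/
def cycComul (H : Type) [Ring H] [HopfAlgebra ℂ H] :
    (n : ℕ) → (H ⊗[ℂ] H) →ₗ[ℂ] (Tb (HB H) (n + 1)).carrier
  | 0 => LinearMap.id
  | n + 1 =>
      (TensorProduct.map LinearMap.id (cycComul H n)) ∘ₗ
        (TensorProduct.assoc ℂ H H H).toLinearMap ∘ₗ
        (TensorProduct.map (comul : H →ₗ[ℂ] H ⊗[ℂ] H) LinearMap.id)

lemma cycComul_comul (H : Type) [Ring H] [HopfAlgebra ℂ H] :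
    ∀ n : ℕ, (cycComul H n) ∘ₗ (comul : H →ₗ[ℂ] H ⊗[ℂ] H) = iterComul H (n + 1)
  | 0 => by
    simp [cycComul, iterComul, TensorProduct.map_id]
    exact congrArg (fun f => f ∘ₗ (comul : H →ₗ[ℂ] H ⊗[ℂ] H)) (TensorProduct.map_id (R := ℂ) (M := H) (N := H)).symm
  | n + 1 => by
    have key : (TensorProduct.assoc ℂ H H H).toLinearMap ∘ₗ
        (TensorProduct.map (comul : H →ₗ[ℂ] H ⊗[ℂ] H) LinearMap.id) ∘ₗ comul =
        (TensorProduct.map LinearMap.id (comul : H →ₗ[ℂ] H ⊗[ℂ] H)) ∘ₗ comul := by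
      simpa [LinearMap.rTensor, LinearMap.lTensor] using Coalgebra.coassoc (R := ℂ) (A := H)
    calc @id (H →ₗ[ℂ] H ⊗[ℂ] (Tb (HB H) (n + 1)).carrier) ((cycComul H (n + 1)) ∘ₗ (comul : H →ₗ[ℂ] H ⊗[ℂ] H))
        = (TensorProduct.map LinearMap.id (cycComul H n)) ∘ₗ
            ((TensorProduct.assoc ℂ H H H).toLinearMap ∘ₗ
              (TensorProduct.map (comul : H →ₗ[ℂ] H ⊗[ℂ] H) LinearMap.id) ∘ₗ comul) := by
          simp [cycComul, LinearMap.comp_assoc]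
          rfl
      _ = (TensorProduct.map LinearMap.id (cycComul H n)) ∘ₗ
            (TensorProduct.map LinearMap.id (comul : H →ₗ[ℂ] H ⊗[ℂ] H)) ∘ₗ (comul : H →ₗ[ℂ] H ⊗[ℂ] H) := by
          rw [key]
      _ = (TensorProduct.map LinearMap.id ((cycComul H n) ∘ₗ comul)) ∘ₗ comul := by
          rw [← LinearMap.comp_assoc, ← TensorProduct.map_comp]
          simp
      _ = @id (H →ₗ[ℂ] H ⊗[ℂ] (Tb (HB H) (n + 1)).carrier) (iterComul H (n + 2)) := by rw [cycComul_comul H n]; rfl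

/-- In a Hopf algebra with involutive antipode, the iterated coproduct of
a cocommutative element `h` is cyclically invariant:
`h₍₁₎ ⊗ h₍₂₎ ⊗ ⋯ ⊗ h₍ₙ₎ = h₍₂₎ ⊗ ⋯ ⊗ h₍ₙ₎ ⊗ h₍₁₎`. -/
theorem stmt3 {H : Type} [Ring H] [HopfAlgebra ℂ H]
    (hS : ∀ x : H, HopfAlgebra.antipode (R := ℂ) (HopfAlgebra.antipode (R := ℂ) x) = x)
    (h : H)
    (hcocomm : (TensorProduct.comm ℂ H H) (comul (R := ℂ) h) = comul (R := ℂ) h) :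
    ∀ n : ℕ,
      iterComul H (n + 1) h =
        cycComul H n ((TensorProduct.comm ℂ H H) (comul (R := ℂ) h)) := by
  intro n
  rw [hcocomm, ← cycComul_comul H n]
  rfl

end
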